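/- There exists a metric space (X,d) whose underlying topological space is a Cantor space and a point p ∈ X such that: (X,d) is doubling, uniformly disconnected, and not uniformly perfect (i.e., has type (1,1,0)); the set S_UP(X,d) of points of X having no uniformly perfect neighborhood equals {p}; and for every ρ ∈ (0,1] there exists r ∈ (0, diam X) with B(p,r) \ U(p, ρr) = ∅, where B is the closed and U the open ball. -/

import Mathlib

open Metric Set
open scoped ENNReal NNReal

noncomputable section

/-- A metric space is doubling if there is `N` such that every closed ball of radius `r`
can be covered by at most `N` closed balls of radius `r / 2`. -/
def IsDoubling (X : Type*) [MetricSpace X] : Prop :=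
  ∃ N : ℕ, ∀ (x : X) (r : ℝ), ∃ c : Finset X, c.card ≤ N ∧
    Metric.closedBall x r ⊆ ⋃ y ∈ c, Metric.closedBall y (r / 2)

/-- Every `δ`-chain is trivial (constant). -/
def IsUniformlyDisconnectedWith (X : Type*) [MetricSpace X] (δ : ℝ) : Prop :=
  ∀ (N : ℕ) (x : ℕ → X),
    (∀ i : ℕ, 1 ≤ i → i ≤ N → dist (x (i - 1)) (x i) ≤ δ * dist (x 0) (x N)) →
    ∀ i ≤ N, x i = x 0

def IsUniformlyDisconnected (X : Type*) [MetricSpace X] : Prop :=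
  ∃ δ : ℝ, 0 < δ ∧ δ < 1 ∧ IsUniformlyDisconnectedWith X δ

/-- `ρ`-uniform perfectness. -/
def IsUniformlyPerfectWith (X : Type*) [MetricSpace X] (ρ : ℝ) : Prop :=
  ∀ (x : X) (r : ℝ), 0 < r → r < Metric.diam (Set.univ : Set X) →
    (Metric.closedBall x r \ Metric.ball x (ρ * r)).Nonempty

def IsUniformlyPerfect (X : Type*) [MetricSpace X] : Prop :=
  ∃ ρ : ℝ, 0 < ρ ∧ ρ ≤ 1 ∧ IsUniformlyPerfectWith X ρ

/-- A metric space has type `(u, v, w) ∈ {0,1}³` (here encoded by `Bool`s) if `u = 1` exactly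
when it is doubling, `v = 1` exactly when it is uniformly disconnected, and `w = 1` exactly
when it is uniformly perfect. -/
def HasType (X : Type*) [MetricSpace X] (u v w : Bool) : Prop :=
  (IsDoubling X ↔ u = true) ∧ (IsUniformlyDisconnected X ↔ v = true) ∧
    (IsUniformlyPerfect X ↔ w = true)

/-- `S_D`: points having no doubling neighborhood. -/
def SD (X : Type*) [MetricSpace X] : Set X :=
  {x : X | ∀ s ∈ nhds x, ¬ IsDoubling ↥s}

/-- `S_UD`: points having no uniformly disconnected neighborhood. -/
def SUD (X : Type*) [MetricSpace X] : Set X :=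
  {x : X | ∀ s ∈ nhds x, ¬ IsUniformlyDisconnected ↥s}

/-- `S_UP`: points having no uniformly perfect neighborhood. -/
def SUP (X : Type*) [MetricSpace X] : Set X :=
  {x : X | ∀ s ∈ nhds x, ¬ IsUniformlyPerfect ↥s}

/-- The ternary correspondence map `T(x) = Σ_{i≥1} 2 x_i / 3^i` (indices shifted to start
at `0`). -/
def cantorT (x : ℕ → Bool) : ℝ :=
  ∑' i : ℕ, 2 * (if x i then (1 : ℝ) else 0) / 3 ^ (i + 1)

/-- A Cantor space: a topological space homeomorphic to the middle-third Cantor set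
(`cantorSet` is Mathlib's middle-third Cantor set in `ℝ`). -/
def IsCantorSpace (X : Type*) [TopologicalSpace X] : Prop :=
  Nonempty (X ≃ₜ ↥cantorSet)

/-- The first index at which `x` and `y` differ. -/
def seqV (x y : ℕ → Bool) : ℕ := sInf {n | x n ≠ y n}

-- The standard ultrametric `e(x,y) = 3^{-(v(x,y)+1)}` on `2^ℕ` (indices starting at `0`,
-- corresponding to `3^{-min{n ≥ 1 : x_n ≠ y_n}}` with indices starting at `1`).
open Classical in
def cantorE (x y : ℕ → Bool) : ℝ :=
  if x = y then 0 else (3 : ℝ)⁻¹ ^ (seqV x y + 1)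

/-- A shrinking sequence: positive, non-increasing, converging to `0`. -/
def IsShrinking (α : ℕ → ℝ) : Prop :=
  (∀ n, 0 < α n) ∧ (∀ m n : ℕ, m ≤ n → α n ≤ α m) ∧
    Filter.Tendsto α Filter.atTop (nhds 0)

-- The distance `d_α(x,y) = α (v(x,y))` associated with a sequence `α`.
open Classical in
def seqDist (α : ℕ → ℝ) (x y : ℕ → Bool) : ℝ :=
  if x = y then 0 else α (seqV x y)

lemma seqV_comm (x y : ℕ → Bool) : seqV x y = seqV y x := by
  unfold seqV
  congr 1
  ext n
  exact ne_comm

lemma seqDist_self (α : ℕ → ℝ) (x : ℕ → Bool) : seqDist α x x = 0 := by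
  rw [seqDist, if_pos rfl]

lemma seqDist_of_ne (α : ℕ → ℝ) {x y : ℕ → Bool} (h : x ≠ y) :
    seqDist α x y = α (seqV x y) := by
  rw [seqDist, if_neg h]

lemma seqDist_nonneg {α : ℕ → ℝ} (hα : ∀ n, 0 < α n) (x y : ℕ → Bool) :
    0 ≤ seqDist α x y := by
  rcases eq_or_ne x y with h | h
  · rw [h, seqDist_self]
  · rw [seqDist_of_ne α h]
    exact (hα _).le

lemma min_seqV_le {x y z : ℕ → Bool} (hxz : x ≠ z) :
    min (seqV x y) (seqV y z) ≤ seqV x z := by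
  have hne : {n | x n ≠ z n}.Nonempty := by
    rcases Function.ne_iff.mp hxz with ⟨n, hn⟩
    exact ⟨n, hn⟩
  have hmem : x (seqV x z) ≠ z (seqV x z) := Nat.sInf_mem hne
  rcases ne_or_eq (x (seqV x z)) (y (seqV x z)) with h | h
  · exact le_trans (min_le_left _ _) (Nat.sInf_le h)
  · have h' : y (seqV x z) ≠ z (seqV x z) := by rw [← h]; exact hmem
    exact le_trans (min_le_right _ _) (Nat.sInf_le h')

/-- The sequentially metrized Cantor space `(2^ℕ, d_α)` for a shrinking sequence `α`. -/
def seqMetricSpace (α : ℕ → ℝ) (hα : IsShrinking α) : MetricSpace (ℕ → Bool) where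
  dist := seqDist α
  dist_self x := seqDist_self α x
  dist_comm x y := by
    show seqDist α x y = seqDist α y x
    rcases eq_or_ne x y with h | h
    · rw [h]
    · rw [seqDist_of_ne α h, seqDist_of_ne α h.symm, seqV_comm]
  dist_triangle x y z := by
    show seqDist α x z ≤ seqDist α x y + seqDist α y z
    rcases eq_or_ne x z with hxz | hxz
    · rw [hxz, seqDist_self]
      exact add_nonneg (seqDist_nonneg hα.1 _ _) (seqDist_nonneg hα.1 _ _)
    rcases eq_or_ne x y with hxy | hxy
    · subst hxy
      rw [seqDist_self, zero_add]
    rcases eq_or_ne y z with hyz | hyz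
    · subst hyz
      rw [seqDist_self, add_zero]
    rw [seqDist_of_ne α hxz, seqDist_of_ne α hxy, seqDist_of_ne α hyz]
    have h1 : α (seqV x z) ≤ α (min (seqV x y) (seqV y z)) :=
      hα.2.1 _ _ (min_seqV_le hxz)
    rcases min_cases (seqV x y) (seqV y z) with ⟨he, _⟩ | ⟨he, _⟩
    · rw [he] at h1
      exact h1.trans (le_add_of_nonneg_right (hα.1 _).le)
    · rw [he] at h1
      exact h1.trans (le_add_of_nonneg_left (hα.1 _).le)
  eq_of_dist_eq_zero := by
    intro x y h
    by_contra hne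
    have h' : seqDist α x y = 0 := h
    rw [seqDist_of_ne α hne] at h'
    exact absurd h' (ne_of_gt (hα.1 _))

/-- The Assouad dimension of a metric space. -/
def assouadDim (X : Type*) [MetricSpace X] : ℝ≥0∞ :=
  sInf {d : ℝ≥0∞ | ∃ s : ℝ, 0 < s ∧ d = ENNReal.ofReal s ∧ ∃ K : ℝ, 0 < K ∧
    ∀ ε : ℝ, 0 < ε → ε < 2 → ∀ r : ℝ, 0 < r → ∀ x : X,
      ∃ c : Finset X, (c.card : ℝ) ≤ K * ε ^ (-s) ∧
        Metric.closedBall x r ⊆ ⋃ y ∈ c, Metric.closedBall y (ε * r)}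

/-- The Hausdorff dimension of (the whole of) a metric space. -/
def hausdorffDim (X : Type*) [MetricSpace X] : ℝ≥0∞ := dimH (Set.univ : Set X)

/-- The topology induced by a metric. -/
def metricTopology {X : Type*} (m : MetricSpace X) : TopologicalSpace X :=
  m.toPseudoMetricSpace.toUniformSpace.toTopologicalSpace

/-- `f : X → Y` is quasi-symmetric: for some self-homeomorphism `η` of `[0,∞)`,
`d(f x, f y)/d(f x, f z) ≤ η (d(x,y)/d(x,z))` for all distinct `x, y, z`. -/
def IsQuasiSymmetric {X Y : Type*} [MetricSpace X] [MetricSpace Y] (f : X → Y) : Prop :=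
  ∃ η : Homeomorph (Set.Ici (0 : ℝ)) (Set.Ici (0 : ℝ)),
    ∀ x y z : X, x ≠ y → x ≠ z → y ≠ z →
      dist (f x) (f y) / dist (f x) (f z) ≤
        (η ⟨dist x y / dist x z, div_nonneg dist_nonneg dist_nonneg⟩ : ℝ)

/-- Two metric spaces (given by explicit metric structures) are quasi-symmetrically
equivalent if there is a quasi-symmetric homeomorphism between them. -/
def QSEquiv (X Y : Type*) (mX : MetricSpace X) (mY : MetricSpace Y) : Prop :=
  ∃ f : @Homeomorph X Y (metricTopology mX) (metricTopology mY),
    @IsQuasiSymmetric X Y mX mY f.toEquiv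


/-- The `ℓ^∞`-product metric (the sup metric) on `X × Y`. -/
def prodMetric {X Y : Type*} (mX : MetricSpace X) (mY : MetricSpace Y) :
    MetricSpace (X × Y) :=
  letI := mX; letI := mY; Prod.metricSpaceMax

/-! ## Construction -/
section Construction

lemma preCantorSet_subset_unit (n : ℕ) : preCantorSet n ⊆ Icc (0:ℝ) 1 := by
  induction n with
  | zero => exact le_refl _
  | succ n ih =>
    rintro x (⟨y, hy, rfl⟩ | ⟨y, hy, rfl⟩) <;>
      · obtain ⟨h0, h1⟩ := ih hy
        constructor <;> [linarith; linarith]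

lemma one_mem_preCantorSet (n : ℕ) : (1:ℝ) ∈ preCantorSet n := by
  induction n with
  | zero => exact ⟨by norm_num, le_refl _⟩
  | succ n ih => exact Or.inr ⟨1, ih, by norm_num⟩

lemma one_mem_cantorSet : (1:ℝ) ∈ cantorSet :=
  Set.mem_iInter.mpr one_mem_preCantorSet

lemma cantorSet_split {x : ℝ} (hx : x ∈ cantorSet) : x ≤ 1/3 ∨ 2/3 ≤ x := by
  have h1 : x ∈ preCantorSet 1 := Set.mem_iInter.mp hx 1
  rcases h1 with ⟨y, hy, rfl⟩ | ⟨y, hy, rfl⟩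
  · left; have := (preCantorSet_subset_unit 0 hy).2; linarith
  · right; have := (preCantorSet_subset_unit 0 hy).1; linarith

lemma cantorSet_left {x : ℝ} (hx : x ∈ cantorSet) (hle : x ≤ 1/3) :
    3 * x ∈ cantorSet := by
  rw [cantorSet, Set.mem_iInter]
  intro n
  have h1 : x ∈ preCantorSet (n+1) := Set.mem_iInter.mp hx (n+1)
  rcases h1 with ⟨y, hy, rfl⟩ | ⟨y, hy, rfl⟩
  · have : 3 * (y / 3) = y := by ring
    rw [this]; exact hy
  · have := (preCantorSet_subset_unit n hy).1
    exfalso; simp only at hle; linarith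

lemma cantorSet_right {x : ℝ} (hx : x ∈ cantorSet) (hle : 2/3 ≤ x) :
    3 * x - 2 ∈ cantorSet := by
  rw [cantorSet, Set.mem_iInter]
  intro n
  have h1 : x ∈ preCantorSet (n+1) := Set.mem_iInter.mp hx (n+1)
  rcases h1 with ⟨y, hy, rfl⟩ | ⟨y, hy, rfl⟩
  · have := (preCantorSet_subset_unit n hy).2
    exfalso; linarith
  · have : 3 * ((2 + y) / 3) - 2 = y := by ring
    rw [this]; exact hy

lemma cantorSet_div3 {x : ℝ} (hx : x ∈ cantorSet) : x / 3 ∈ cantorSet := by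
  rw [cantorSet, Set.mem_iInter]
  intro n
  cases n with
  | zero =>
    have := preCantorSet_subset_unit _ (Set.mem_iInter.mp hx 0)
    exact ⟨by linarith [this.1], by linarith [this.2]⟩
  | succ n => exact Or.inl ⟨x, Set.mem_iInter.mp hx n, rfl⟩

lemma cantorSet_two_add_div3 {x : ℝ} (hx : x ∈ cantorSet) : (2 + x) / 3 ∈ cantorSet := by
  rw [cantorSet, Set.mem_iInter]
  intro n
  cases n with
  | zero =>
    have := preCantorSet_subset_unit _ (Set.mem_iInter.mp hx 0)
    exact ⟨by linarith [this.1], by linarith [this.2]⟩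
  | succ n => exact Or.inr ⟨x, Set.mem_iInter.mp hx n, rfl⟩

lemma cantorSet_scale_up {x : ℝ} (n : ℕ) (hx : x ∈ cantorSet)
    (hle : x ≤ (3:ℝ)⁻¹ ^ n) : 3 ^ n * x ∈ cantorSet := by
  induction n generalizing x with
  | zero => simpa using hx
  | succ n ih =>
    have h13 : x ≤ 1/3 := by
      calc x ≤ (3:ℝ)⁻¹ ^ (n+1) := hle
      _ ≤ (3:ℝ)⁻¹ ^ 1 := by
        apply pow_le_pow_of_le_one (by norm_num) (by norm_num) (by omega)
      _ = 1/3 := by norm_num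
    have h3x : 3 * x ∈ cantorSet := cantorSet_left hx h13
    have : 3 * x ≤ (3:ℝ)⁻¹ ^ n := by
      rw [pow_succ] at hle
      have : (3:ℝ)⁻¹ ^ n * 3⁻¹ * 3 = (3:ℝ)⁻¹ ^ n := by ring
      nlinarith [hle]
    have := ih h3x this
    have heq : (3:ℝ) ^ (n+1) * x = 3 ^ n * (3 * x) := by ring
    rwa [heq]

lemma cantorSet_scale_down {x : ℝ} (n : ℕ) (hx : x ∈ cantorSet) :
    (3:ℝ)⁻¹ ^ n * x ∈ cantorSet := by
  induction n with
  | zero => simpa using hx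
  | succ n ih =>
    have : (3:ℝ)⁻¹ ^ (n+1) * x = ((3:ℝ)⁻¹ ^ n * x) / 3 := by ring
    rw [this]
    exact cantorSet_div3 ih

/-- no points of the Cantor set in `(3⁻¹ⁿ, 2·3⁻¹ⁿ)`. -/
lemma cantorSet_gap_above (n : ℕ) {x : ℝ} (hx : x ∈ cantorSet)
    (h1 : (3:ℝ)⁻¹ ^ n < x) (h2 : x < 2 * (3:ℝ)⁻¹ ^ n) : False := by
  cases n with
  | zero =>
    have := (preCantorSet_subset_unit 0 (Set.mem_iInter.mp hx 0)).2
    simp at h1; linarith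
  | succ n =>
    have hle : x ≤ (3:ℝ)⁻¹ ^ n := by
      have : (2:ℝ) * 3⁻¹ ^ (n+1) ≤ 3⁻¹ ^ n := by
        rw [pow_succ]; nlinarith [pow_pos (show (0:ℝ) < 3⁻¹ by norm_num) n]
      linarith
    have hmem := cantorSet_scale_up n hx hle
    have hpow : (0:ℝ) < (3:ℝ)⁻¹ ^ n := pow_pos (by norm_num) n
    have hinv : (3:ℝ) ^ n * (3:ℝ)⁻¹ ^ n = 1 := by
      rw [← mul_pow]; norm_num
    rcases cantorSet_split hmem with h | h
    · -- 3^n x ≤ 1/3 but x > 3⁻¹^(n+1) means 3^n x > 1/3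
      have : (3:ℝ) ^ n * x > 1/3 := by
        have := mul_lt_mul_of_pos_left h1 (pow_pos (show (0:ℝ) < 3 by norm_num) n)
        rw [pow_succ, ← mul_assoc, hinv] at this
        linarith
      linarith
    · -- 3^n x ≥ 2/3 but x < 2·3⁻¹^(n+1)·3 = ...
      have : (3:ℝ) ^ n * x < 2/3 := by
        have := mul_lt_mul_of_pos_left h2 (pow_pos (show (0:ℝ) < 3 by norm_num) n)
        rw [show (3:ℝ)^n * (2 * 3⁻¹^(n+1)) = 2/3 * (3^n * 3⁻¹^n) by rw [pow_succ]; ring] at this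
        rw [hinv] at this
        linarith
      linarith

lemma cantorSet_unit {x : ℝ} (hx : x ∈ cantorSet) : 0 ≤ x ∧ x ≤ 1 :=
  preCantorSet_subset_unit 0 (Set.mem_iInter.mp hx 0)

/-- gap lemma, quantified version -/
lemma cantorSet_gap_aux (n : ℕ) :
    ∀ a b : ℝ, a ∈ cantorSet → b ∈ cantorSet → a < b → (3:ℝ)⁻¹ ^ n ≤ b - a →
    ∃ u v : ℝ, a ≤ u ∧ v ≤ b ∧ (b - a) / 3 ≤ v - u ∧ cantorSet ∩ Set.Ioo u v = ∅ := by
  induction n with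
  | zero =>
    intro a b ha hb hab hd
    simp only [pow_zero] at hd
    obtain ⟨ha0, ha1⟩ := cantorSet_unit ha
    obtain ⟨hb0, hb1⟩ := cantorSet_unit hb
    refine ⟨1/3, 2/3, by linarith, by linarith, by linarith, ?_⟩
    ext z; simp only [Set.mem_inter_iff, Set.mem_Ioo, Set.mem_empty_iff_false, iff_false,
      not_and, and_imp]
    intro hz h1 h2
    rcases cantorSet_split hz with h | h <;> linarith
  | succ n ih =>
    intro a b ha hb hab hd
    obtain ⟨ha0, ha1⟩ := cantorSet_unit ha
    obtain ⟨hb0, hb1⟩ := cantorSet_unit hb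
    rcases cantorSet_split ha with hA | hA
    · rcases cantorSet_split hb with hB | hB
      · -- both left: scale up
        have ha3 := cantorSet_left ha hA
        have hb3 := cantorSet_left hb hB
        have hd3 : (3:ℝ)⁻¹ ^ n ≤ 3 * b - 3 * a := by
          have : (3:ℝ)⁻¹ ^ n = 3 * (3:ℝ)⁻¹ ^ (n+1) := by
            rw [pow_succ]; ring
          nlinarith
        obtain ⟨u, v, hu, hv, hlen, hempty⟩ := ih (3*a) (3*b) ha3 hb3 (by linarith) hd3
        refine ⟨u/3, v/3, by linarith, by linarith, by linarith, ?_⟩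
        ext z; simp only [Set.mem_inter_iff, Set.mem_Ioo, Set.mem_empty_iff_false, iff_false,
          not_and, and_imp]
        intro hz h1 h2
        have hz13 : z ≤ 1/3 := by
          have hvb : v ≤ 3 * b := hv
          have : z < v/3 := h2
          have hb13 : b ≤ 1/3 := hB
          linarith
        have h3z := cantorSet_left hz hz13
        have : 3 * z ∈ cantorSet ∩ Set.Ioo u v := ⟨h3z, by linarith, by linarith⟩
        rw [hempty] at this; exact this
      · -- a left, b right: middle gap
        refine ⟨1/3, 2/3, hA, hB, by linarith, ?_⟩
        ext z; simp only [Set.mem_inter_iff, Set.mem_Ioo, Set.mem_empty_iff_false, iff_false,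
          not_and, and_imp]
        intro hz h1 h2
        rcases cantorSet_split hz with h | h <;> linarith
    · -- both right (b ≥ a ≥ 2/3)
      have hB : 2/3 ≤ b := by linarith
      have ha3 := cantorSet_right ha hA
      have hb3 := cantorSet_right hb hB
      have hd3 : (3:ℝ)⁻¹ ^ n ≤ (3*b-2) - (3*a-2) := by
        have : (3:ℝ)⁻¹ ^ n = 3 * (3:ℝ)⁻¹ ^ (n+1) := by rw [pow_succ]; ring
        nlinarith
      obtain ⟨u, v, hu, hv, hlen, hempty⟩ := ih _ _ ha3 hb3 (by linarith) hd3
      refine ⟨(u+2)/3, (v+2)/3, by linarith, by linarith, by linarith, ?_⟩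
      ext z; simp only [Set.mem_inter_iff, Set.mem_Ioo, Set.mem_empty_iff_false, iff_false,
        not_and, and_imp]
      intro hz h1 h2
      have hz23 : 2/3 ≤ z := by
        rcases cantorSet_split hz with h | h
        · exfalso
          have hua : 3*a - 2 ≤ u := hu
          linarith
        · exact h
      have h3z := cantorSet_right hz hz23
      have : 3 * z - 2 ∈ cantorSet ∩ Set.Ioo u v := ⟨h3z, by linarith, by linarith⟩
      rw [hempty] at this; exact this

lemma cantorSet_gap {a b : ℝ} (ha : a ∈ cantorSet) (hb : b ∈ cantorSet) (hab : a < b) :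
    ∃ u v : ℝ, a ≤ u ∧ v ≤ b ∧ (b - a) / 3 ≤ v - u ∧ cantorSet ∩ Set.Ioo u v = ∅ := by
  obtain ⟨n, hn⟩ := exists_pow_lt_of_lt_one (show (0:ℝ) < b - a by linarith)
    (show (3:ℝ)⁻¹ < 1 by norm_num)
  exact cantorSet_gap_aux n a b ha hb hab hn.le

/-- uniform perfectness: points at every scale. -/
lemma cantorSet_perfect_aux (n : ℕ) :
    ∀ x ∈ cantorSet, ∃ y ∈ cantorSet,
      (3:ℝ)⁻¹ ^ (n+1) ≤ |x - y| ∧ |x - y| ≤ (3:ℝ)⁻¹ ^ n := by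
  induction n with
  | zero =>
    intro x hx
    obtain ⟨h0, h1⟩ := cantorSet_unit hx
    rcases cantorSet_split hx with h | h
    · refine ⟨1, one_mem_cantorSet, ?_, ?_⟩ <;>
        · rw [abs_sub_comm, abs_of_nonneg (by linarith)]; norm_num; linarith
    · refine ⟨0, zero_mem_cantorSet, ?_, ?_⟩ <;>
        · rw [abs_of_nonneg (by linarith)]; norm_num; linarith
  | succ n ih =>
    intro x hx
    rcases cantorSet_split hx with h | h
    · obtain ⟨y', hy', hl, hr⟩ := ih (3*x) (cantorSet_left hx h)
      refine ⟨y'/3, cantorSet_div3 hy', ?_, ?_⟩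
      · have : |x - y'/3| = |3*x - y'| / 3 := by
          rw [show x - y'/3 = (3*x - y')/3 by ring, abs_div]
          norm_num
        rw [this, pow_succ]
        rw [pow_succ] at hl ⊢
        nlinarith [hl]
      · have : |x - y'/3| = |3*x - y'| / 3 := by
          rw [show x - y'/3 = (3*x - y')/3 by ring, abs_div]; norm_num
        rw [this, pow_succ]
        nlinarith [hr]
    · obtain ⟨y', hy', hl, hr⟩ := ih (3*x - 2) (cantorSet_right hx h)
      refine ⟨(2+y')/3, cantorSet_two_add_div3 hy', ?_, ?_⟩
      · have heq : |x - (2+y')/3| = |(3*x-2) - y'| / 3 := by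
          rw [show x - (2+y')/3 = ((3*x-2) - y')/3 by ring, abs_div]; norm_num
        rw [heq, pow_succ]
        rw [pow_succ] at hl ⊢
        nlinarith [hl]
      · have heq : |x - (2+y')/3| = |(3*x-2) - y'| / 3 := by
          rw [show x - (2+y')/3 = ((3*x-2) - y')/3 by ring, abs_div]; norm_num
        rw [heq, pow_succ]
        nlinarith [hr]

/-! ### the weights and the space -/

noncomputable section

def tW (n : ℕ) : ℝ := (4:ℝ)⁻¹ ^ (n * n)
def sW (n : ℕ) : ℝ := tW n / 4

lemma tW_pos (n : ℕ) : 0 < tW n := pow_pos (by norm_num) _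
lemma sW_pos (n : ℕ) : 0 < sW n := div_pos (tW_pos n) (by norm_num)
lemma tW_zero : tW 0 = 1 := by simp [tW]
lemma tW_le_one (n : ℕ) : tW n ≤ 1 := by
  have := pow_le_pow_of_le_one (show (0:ℝ) ≤ 4⁻¹ by norm_num) (show (4:ℝ)⁻¹ ≤ 1 by norm_num) (Nat.zero_le (n*n))
  simpa [tW] using this

lemma tW_succ_le (n : ℕ) : tW (n+1) ≤ tW n / 4 := by
  unfold tW
  rw [show (n+1)*(n+1) = n*n + (2*n+1) by ring, pow_add]
  have h1 : (4:ℝ)⁻¹ ^ (2*n+1) ≤ (4:ℝ)⁻¹ ^ 1 :=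
    pow_le_pow_of_le_one (by norm_num) (by norm_num) (by omega)
  have h2 : (0:ℝ) < (4:ℝ)⁻¹ ^ (n*n) := pow_pos (by norm_num) _
  calc (4:ℝ)⁻¹^(n*n) * (4:ℝ)⁻¹^(2*n+1) ≤ (4:ℝ)⁻¹^(n*n) * (4:ℝ)⁻¹^1 := by nlinarith
  _ = (4:ℝ)⁻¹^(n*n) / 4 := by rw [pow_one]; ring

lemma tW_antitone : ∀ {m n : ℕ}, m ≤ n → tW n ≤ tW m := by
  intro m n h
  exact pow_le_pow_of_le_one (by norm_num) (by norm_num) (Nat.mul_le_mul h h)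

lemma tW_strict {m n : ℕ} (h : m < n) : tW n < tW m := by
  calc tW n ≤ tW (m+1) := tW_antitone h
  _ ≤ tW m / 4 := tW_succ_le m
  _ < tW m := by linarith [tW_pos m]

lemma tsW_succ_le (n : ℕ) : tW (n+1) + sW (n+1) ≤ tW n / 2 := by
  have h := tW_succ_le n
  have := tW_pos n
  unfold sW; linarith

lemma tsW_antitone {m n : ℕ} (h : m ≤ n) : tW n + sW n ≤ tW m + sW m := by
  have := tW_antitone h
  unfold sW; linarith

/-- the key shrinking-ratio property -/
lemma tW_ratio (ε : ℝ) (hε : 0 < ε) (M : ℕ) :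
    ∃ n, M ≤ n ∧ tW (n+1) + sW (n+1) < ε * tW n := by
  obtain ⟨k, hk⟩ := exists_pow_lt_of_lt_one (show (0:ℝ) < ε/2 by linarith)
    (show (4:ℝ)⁻¹ < 1 by norm_num)
  refine ⟨M + k, Nat.le_add_right _ _, ?_⟩
  set n := M + k
  have h1 : tW (n+1) + sW (n+1) ≤ (5/4) * tW (n+1) := by unfold sW; linarith [tW_pos (n+1)]
  have h2 : tW (n+1) ≤ tW n * (4:ℝ)⁻¹ ^ (2*n+1) := by
    unfold tW
    rw [show (n+1)*(n+1) = n*n + (2*n+1) by ring, pow_add]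
  have h3 : (4:ℝ)⁻¹ ^ (2*n+1) ≤ (4:ℝ)⁻¹ ^ k :=
    pow_le_pow_of_le_one (by norm_num) (by norm_num) (by omega)
  have htn := tW_pos n
  have h4 : (0:ℝ) < (4:ℝ)⁻¹ ^ k := pow_pos (by norm_num) _
  calc tW (n+1) + sW (n+1) ≤ (5/4) * (tW n * (4:ℝ)⁻¹ ^ k) := by nlinarith [tW_pos (n+1)]
  _ < ε * tW n := by nlinarith

/-- the space: `{0}` together with scaled copies of the Cantor set -/
def XS : Set ℝ := {0} ∪ ⋃ n, (fun c => tW n + sW n * c) '' cantorSet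

lemma zero_mem_XS : (0:ℝ) ∈ XS := Or.inl rfl

lemma piece_mem_XS {n : ℕ} {c : ℝ} (hc : c ∈ cantorSet) : tW n + sW n * c ∈ XS :=
  Or.inr (Set.mem_iUnion.mpr ⟨n, ⟨c, hc, rfl⟩⟩)

lemma piece_bounds {n : ℕ} {c : ℝ} (hc : c ∈ cantorSet) :
    tW n ≤ tW n + sW n * c ∧ tW n + sW n * c ≤ tW n + sW n := by
  obtain ⟨h0, h1⟩ := cantorSet_unit hc
  have := sW_pos n
  constructor <;> nlinarith

lemma XS_cases {z : ℝ} (hz : z ∈ XS) :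
    z = 0 ∨ ∃ n, ∃ c ∈ cantorSet, z = tW n + sW n * c := by
  rcases hz with h | h
  · exact Or.inl h
  · obtain ⟨n, c, hc, rfl⟩ := Set.mem_iUnion.mp h
    exact Or.inr ⟨n, c, hc, rfl⟩

lemma XS_bounds {z : ℝ} (hz : z ∈ XS) : 0 ≤ z ∧ z ≤ tW 0 + sW 0 := by
  rcases XS_cases hz with rfl | ⟨n, c, hc, rfl⟩
  · exact ⟨le_refl 0, by linarith [tW_pos 0, sW_pos 0]⟩
  · obtain ⟨h1, h2⟩ := piece_bounds (n := n) hc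
    refine ⟨le_trans (tW_pos n).le h1, le_trans h2 (tsW_antitone (Nat.zero_le n))⟩

/-- elements below `tW m` are at most `tW (m+1) + sW (m+1)` -/
lemma XS_small {z : ℝ} (hz : z ∈ XS) (m : ℕ) (h : z < tW m) :
    z ≤ tW (m+1) + sW (m+1) := by
  rcases XS_cases hz with rfl | ⟨n, c, hc, rfl⟩
  · linarith [tW_pos (m+1), sW_pos (m+1)]
  · obtain ⟨h1, h2⟩ := piece_bounds (n := n) hc
    have hnm : m < n := by
      by_contra hc'
      exact absurd (le_trans (tW_antitone (Nat.le_of_not_lt hc')) h1) (not_le.mpr h)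
    exact le_trans h2 (tsW_antitone hnm)

/-- the gap between consecutive pieces -/
lemma XS_gap_between (n : ℕ) : XS ∩ Set.Ioo (tW (n+1) + sW (n+1)) (tW n) = ∅ := by
  ext z
  simp only [Set.mem_inter_iff, Set.mem_Ioo, Set.mem_empty_iff_false, iff_false, not_and, and_imp]
  intro hz h1 h2
  exact absurd (XS_small hz n h2) (not_le.mpr h1)

end

/-! ### the homeomorphism -/

noncomputable section
open Classical in
/-- the piecewise-affine correspondence from the Cantor set onto `XS` -/
def FF (y : ℝ) : ℝ :=
  if h : ∃ n : ℕ, (3:ℝ)⁻¹ ^ (n+1) < y then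
    tW (Nat.find h) + sW (Nat.find h) * (3 ^ (Nat.find h + 1) * y - 2)
  else 0

lemma FF_exists_of_pos {y : ℝ} (hy : 0 < y) : ∃ n : ℕ, (3:ℝ)⁻¹ ^ (n+1) < y := by
  obtain ⟨n, hn⟩ := exists_pow_lt_of_lt_one hy (show (3:ℝ)⁻¹ < 1 by norm_num)
  exact ⟨n, by
    calc (3:ℝ)⁻¹ ^ (n+1) < (3:ℝ)⁻¹ ^ n := by
          apply pow_lt_pow_right_of_lt_one₀ (by norm_num) (by norm_num) (by omega)
    _ < y := hn⟩

lemma FF_zero : FF 0 = 0 := by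
  rw [FF, dif_neg]
  push_neg
  intro n
  positivity

lemma FF_nonpos {y : ℝ} (hy : y ≤ 0) : FF y = 0 := by
  rw [FF, dif_neg]
  push_neg
  intro n
  calc y ≤ 0 := hy
  _ ≤ (3:ℝ)⁻¹ ^ (n+1) := by positivity

/-- characterization of the index -/
lemma FF_find_eq {y : ℝ} (h : ∃ n : ℕ, (3:ℝ)⁻¹ ^ (n+1) < y) {n : ℕ}
    (h1 : (3:ℝ)⁻¹ ^ (n+1) < y) (h2 : y ≤ (3:ℝ)⁻¹ ^ n) : Nat.find h = n := by
  rw [Nat.find_eq_iff]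
  refine ⟨h1, fun m hm => ?_⟩
  push_neg
  calc y ≤ (3:ℝ)⁻¹ ^ n := h2
  _ ≤ (3:ℝ)⁻¹ ^ (m+1) :=
    pow_le_pow_of_le_one (by norm_num) (by norm_num) (by omega)

lemma FF_find_le {y : ℝ} (hy : y ∈ cantorSet) (h : ∃ n : ℕ, (3:ℝ)⁻¹ ^ (n+1) < y) :
    y ≤ (3:ℝ)⁻¹ ^ (Nat.find h) := by
  rcases Nat.eq_zero_or_pos (Nat.find h) with h0 | h0
  · rw [h0, pow_zero]
    exact (cantorSet_unit hy).2
  · obtain ⟨m, hm⟩ := Nat.exists_eq_succ_of_ne_zero (Nat.pos_iff_ne_zero.mp h0)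
    have := Nat.find_min h (m := m) (by omega)
    push_neg at this
    rwa [hm]

/-- at a positive Cantor point, the digit is a Cantor point -/
lemma FF_digit_mem {y : ℝ} (hy : y ∈ cantorSet) (h : ∃ n : ℕ, (3:ℝ)⁻¹ ^ (n+1) < y) :
    (3:ℝ) ^ (Nat.find h + 1) * y - 2 ∈ cantorSet := by
  set n := Nat.find h with hn
  have h1 : (3:ℝ)⁻¹ ^ (n+1) < y := Nat.find_spec h
  have h2 : y ≤ (3:ℝ)⁻¹ ^ n := FF_find_le hy h
  have hz : (3:ℝ) ^ n * y ∈ cantorSet := cantorSet_scale_up n hy h2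
  have hzgt : 1/3 < (3:ℝ) ^ n * y := by
    have hpos : (0:ℝ) < 3 ^ n := pow_pos (by norm_num) n
    have := mul_lt_mul_of_pos_left h1 hpos
    have hinv : (3:ℝ) ^ n * (3:ℝ)⁻¹ ^ n = 1 := by rw [← mul_pow]; norm_num
    rw [pow_succ, ← mul_assoc, hinv] at this
    linarith
  rcases cantorSet_split hz with h' | h'
  · linarith
  · have := cantorSet_right hz h'
    have heq : (3:ℝ) * (3 ^ n * y) - 2 = 3 ^ (n+1) * y - 2 := by rw [pow_succ]; ring
    rwa [heq] at this

lemma FF_formula {y : ℝ} (h : ∃ n : ℕ, (3:ℝ)⁻¹ ^ (n+1) < y) :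
    FF y = tW (Nat.find h) + sW (Nat.find h) * (3 ^ (Nat.find h + 1) * y - 2) := by
  rw [FF, dif_pos h]

lemma FF_mem {y : ℝ} (hy : y ∈ cantorSet) : FF y ∈ XS := by
  by_cases h : ∃ n : ℕ, (3:ℝ)⁻¹ ^ (n+1) < y
  · rw [FF_formula h]
    exact piece_mem_XS (FF_digit_mem hy h)
  · rw [FF, dif_neg h]
    exact zero_mem_XS

/-- value on the canonical parametrization of the `n`-th piece -/
lemma FF_on_piece {c : ℝ} (hc : c ∈ cantorSet) (n : ℕ) :
    FF ((2 + c) * (3:ℝ)⁻¹ ^ (n+1)) = tW n + sW n * c := by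
  obtain ⟨hc0, hc1⟩ := cantorSet_unit hc
  have hpow : (0:ℝ) < (3:ℝ)⁻¹ ^ (n+1) := pow_pos (by norm_num) _
  have h : ∃ m : ℕ, (3:ℝ)⁻¹ ^ (m+1) < (2 + c) * (3:ℝ)⁻¹ ^ (n+1) := ⟨n, by nlinarith⟩
  have hfind : Nat.find h = n := by
    apply FF_find_eq h (by nlinarith)
    calc (2 + c) * (3:ℝ)⁻¹ ^ (n+1) ≤ 3 * (3:ℝ)⁻¹ ^ (n+1) := by nlinarith
    _ = (3:ℝ)⁻¹ ^ n := by rw [pow_succ]; ring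
  rw [FF_formula h, hfind]
  have hinv : (3:ℝ) ^ (n+1) * (3:ℝ)⁻¹ ^ (n+1) = 1 := by rw [← mul_pow]; norm_num
  have : (3:ℝ) ^ (n+1) * ((2 + c) * (3:ℝ)⁻¹ ^ (n+1)) - 2 = c := by
    rw [show (3:ℝ) ^ (n+1) * ((2 + c) * (3:ℝ)⁻¹ ^ (n+1)) = (2+c) * ((3:ℝ)^(n+1) * (3:ℝ)⁻¹^(n+1)) by ring, hinv]
    ring
  rw [this]

lemma piece_param_mem {c : ℝ} (hc : c ∈ cantorSet) (n : ℕ) :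
    (2 + c) * (3:ℝ)⁻¹ ^ (n+1) ∈ cantorSet := by
  have h1 : (2 + c) / 3 ∈ cantorSet := cantorSet_two_add_div3 hc
  have := cantorSet_scale_down (x := (2+c)/3) n h1
  have heq : (3:ℝ)⁻¹ ^ n * ((2 + c)/3) = (2 + c) * (3:ℝ)⁻¹ ^ (n+1) := by
    rw [pow_succ]; ring
  rwa [heq] at this

lemma FF_surj {z : ℝ} (hz : z ∈ XS) : ∃ y ∈ cantorSet, FF y = z := by
  rcases XS_cases hz with rfl | ⟨n, c, hc, rfl⟩
  · exact ⟨0, zero_mem_cantorSet, FF_zero⟩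
  · exact ⟨(2 + c) * (3:ℝ)⁻¹ ^ (n+1), piece_param_mem hc n, FF_on_piece hc n⟩

lemma FF_pos_bounds {y : ℝ} (hy : y ∈ cantorSet) (h : ∃ n : ℕ, (3:ℝ)⁻¹ ^ (n+1) < y) :
    tW (Nat.find h) ≤ FF y ∧ FF y ≤ tW (Nat.find h) + sW (Nat.find h) := by
  rw [FF_formula h]
  exact piece_bounds (FF_digit_mem hy h)

lemma FF_inj {y y' : ℝ} (hy : y ∈ cantorSet) (hy' : y' ∈ cantorSet)
    (heq : FF y = FF y') : y = y' := by
  obtain ⟨h0, _⟩ := cantorSet_unit hy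
  obtain ⟨h0', _⟩ := cantorSet_unit hy'
  by_cases h : ∃ n : ℕ, (3:ℝ)⁻¹ ^ (n+1) < y
  · by_cases h' : ∃ n : ℕ, (3:ℝ)⁻¹ ^ (n+1) < y'
    · -- both positive
      obtain ⟨hb1, hb2⟩ := FF_pos_bounds hy h
      obtain ⟨hb1', hb2'⟩ := FF_pos_bounds hy' h'
      have hfind : Nat.find h = Nat.find h' := by
        by_contra hne
        rcases Nat.lt_or_ge (Nat.find h) (Nat.find h') with hlt | hge
        · have : tW (Nat.find h') + sW (Nat.find h') ≤ tW (Nat.find h) / 2 :=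
            le_trans (tsW_antitone hlt) (tsW_succ_le _)
          have := tW_pos (Nat.find h)
          linarith
        · have hlt' : Nat.find h' < Nat.find h := by omega
          have : tW (Nat.find h) + sW (Nat.find h) ≤ tW (Nat.find h') / 2 :=
            le_trans (tsW_antitone hlt') (tsW_succ_le _)
          have := tW_pos (Nat.find h')
          linarith
      rw [FF_formula h, FF_formula h', hfind] at heq
      have hs := sW_pos (Nat.find h')
      have hp : (0:ℝ) < 3 ^ (Nat.find h' + 1) := pow_pos (by norm_num) _
      have : (3:ℝ) ^ (Nat.find h' + 1) * y = 3 ^ (Nat.find h' + 1) * y' := by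
        have h3 := mul_left_cancel₀ (ne_of_gt hs) (by linarith : sW (Nat.find h') * (3 ^ (Nat.find h' + 1) * y - 2) = sW (Nat.find h') * (3 ^ (Nat.find h' + 1) * y' - 2))
        linarith
      exact mul_left_cancel₀ (ne_of_gt hp) this
    · -- y' = 0 case: FF y > 0 = FF y'
      exfalso
      obtain ⟨hb1, _⟩ := FF_pos_bounds hy h
      have hz : FF y' = 0 := by rw [FF, dif_neg h']
      have := tW_pos (Nat.find h)
      rw [heq, hz] at hb1
      linarith
  · by_cases h' : ∃ n : ℕ, (3:ℝ)⁻¹ ^ (n+1) < y'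
    · exfalso
      obtain ⟨hb1, _⟩ := FF_pos_bounds hy' h'
      have hz : FF y = 0 := by rw [FF, dif_neg h]
      have := tW_pos (Nat.find h')
      rw [← heq, hz] at hb1
      linarith
    · -- both zero
      push_neg at h h'
      have hy0 : y = 0 := by
        by_contra hne
        have : 0 < y := lt_of_le_of_ne h0 (Ne.symm hne)
        obtain ⟨n, hn⟩ := FF_exists_of_pos this
        exact absurd hn (not_lt.mpr (h n))
      have hy0' : y' = 0 := by
        by_contra hne
        have : 0 < y' := lt_of_le_of_ne h0' (Ne.symm hne)
        obtain ⟨n, hn⟩ := FF_exists_of_pos this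
        exact absurd hn (not_lt.mpr (h' n))
      rw [hy0, hy0']

end

/-! ### continuity -/

noncomputable section

lemma FF_contOn : ContinuousOn FF cantorSet := by
  intro y0 hy0
  obtain ⟨h00, h01⟩ := cantorSet_unit hy0
  rcases eq_or_lt_of_le h00 with h0 | h0
  · -- continuity at 0
    rw [ContinuousWithinAt, ← h0, FF_zero]
    rw [Metric.tendsto_nhdsWithin_nhds]
    intro ε hε
    obtain ⟨m, _, hm⟩ := tW_ratio ε hε 0
    refine ⟨(3:ℝ)⁻¹ ^ (m+2), by positivity, ?_⟩
    intro y hy hdist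
    rw [Real.dist_eq, sub_zero] at hdist ⊢
    have hy0' : 0 ≤ y := (cantorSet_unit hy).1
    rw [abs_of_nonneg hy0'] at hdist
    have hFFnn : 0 ≤ FF y ∧ FF y ≤ tW (m+1) + sW (m+1) := by
      by_cases h : ∃ n : ℕ, (3:ℝ)⁻¹ ^ (n+1) < y
      · obtain ⟨hb1, hb2⟩ := FF_pos_bounds hy h
        have hfge : m + 1 ≤ Nat.find h := by
          by_contra hc
          push_neg at hc
          have h1 : (3:ℝ)⁻¹ ^ (Nat.find h + 1) < y := Nat.find_spec h
          have h2 : (3:ℝ)⁻¹ ^ (m+2) ≤ (3:ℝ)⁻¹ ^ (Nat.find h + 1) :=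
            pow_le_pow_of_le_one (by norm_num) (by norm_num) (by omega)
          linarith
        exact ⟨le_trans (tW_pos _).le hb1, le_trans hb2 (tsW_antitone hfge)⟩
      · have hz : FF y = 0 := by rw [FF, dif_neg h]
        rw [hz]
        exact ⟨le_refl 0, by linarith [tW_pos (m+1), sW_pos (m+1)]⟩
    rw [abs_of_nonneg hFFnn.1]
    have htm : tW m ≤ 1 := tW_le_one m
    calc FF y ≤ tW (m+1) + sW (m+1) := hFFnn.2
    _ < ε * tW m := hm
    _ ≤ ε := by nlinarith
  · -- continuity at a positive point
    have h := FF_exists_of_pos h0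
    set n0 := Nat.find h with hn0
    have h1 : (3:ℝ)⁻¹ ^ (n0+1) < y0 := Nat.find_spec h
    have h2 : y0 ≤ (3:ℝ)⁻¹ ^ n0 := FF_find_le hy0 h
    set g : ℝ → ℝ := fun y => tW n0 + sW n0 * (3 ^ (n0 + 1) * y - 2) with hg
    have hgc : ContinuousWithinAt g cantorSet y0 :=
      (Continuous.continuousWithinAt (by fun_prop))
    apply hgc.congr_of_eventuallyEq ?_ ?_
    · -- FF =ᶠ g near y0 within cantorSet
      have hU : Set.Ioo ((3:ℝ)⁻¹ ^ (n0+1)) (2 * (3:ℝ)⁻¹ ^ n0) ∈ nhds y0 := by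
        apply Ioo_mem_nhds h1
        have := pow_pos (show (0:ℝ) < 3⁻¹ by norm_num) n0
        linarith
      filter_upwards [mem_nhdsWithin_of_mem_nhds hU, self_mem_nhdsWithin] with y hyU hyC
      have hyabove : y ≤ (3:ℝ)⁻¹ ^ n0 := by
        by_contra hc
        push_neg at hc
        exact cantorSet_gap_above n0 hyC hc hyU.2
      have hyh : ∃ m : ℕ, (3:ℝ)⁻¹ ^ (m+1) < y := ⟨n0, hyU.1⟩
      rw [FF_formula hyh, FF_find_eq hyh hyU.1 hyabove]
    · rw [FF_formula h]

/-- the underlying map between subtypes -/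
def FFc : ↥cantorSet → ↥XS := fun y => ⟨FF y, FF_mem y.2⟩

lemma FFc_bij : Function.Bijective FFc := by
  constructor
  · intro a b hab
    exact Subtype.ext (FF_inj a.2 b.2 (congrArg Subtype.val hab))
  · rintro ⟨z, hz⟩
    obtain ⟨y, hy, hFy⟩ := FF_surj hz
    exact ⟨⟨y, hy⟩, Subtype.ext hFy⟩

lemma FFc_cont : Continuous FFc := by
  apply Continuous.subtype_mk
  exact continuousOn_iff_continuous_restrict.mp FF_contOn

instance : CompactSpace ↥cantorSet := isCompact_iff_compactSpace.mp isCompact_cantorSet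

/-- the homeomorphism from the Cantor set onto `XS` -/
def XShomeo : ↥cantorSet ≃ₜ ↥XS :=
  Continuous.homeoOfEquivCompactToT2 (f := Equiv.ofBijective FFc FFc_bij) FFc_cont

end

end Construction

section Metric2
noncomputable section
open Classical in
/-- every subset of `ℝ` is doubling (with constant 9) -/
lemma isDoubling_real_subset (S : Set ℝ) : IsDoubling ↥S := by
  refine ⟨9, fun x r => ?_⟩
  by_cases hr : r ≤ 0
  · refine ⟨{x}, by simp, ?_⟩
    intro z hz
    rw [Metric.mem_closedBall] at hz
    have h0 : (0:ℝ) ≤ dist z x := dist_nonneg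
    have hd : dist z x = 0 := le_antisymm (le_trans hz hr) h0
    simp only [Set.mem_iUnion, Finset.mem_singleton]
    exact ⟨x, rfl, by rw [Metric.mem_closedBall, hd]; linarith⟩
  push_neg at hr
  set q : ↥S → ℕ := fun z => ⌊((z:ℝ) - (x:ℝ) + r)/(r/4)⌋₊ with hq
  have key : ∀ z w : ↥S, dist z x ≤ r → dist w x ≤ r → q z = q w → dist z w ≤ r / 2 := by
    intro z w hz hw hqzw
    rw [Subtype.dist_eq, Real.dist_eq] at hz hw ⊢
    rw [abs_le] at hz hw
    have hz0 : 0 ≤ ((z:ℝ) - (x:ℝ) + r)/(r/4) :=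
      div_nonneg (by linarith) (by linarith)
    have hw0 : 0 ≤ ((w:ℝ) - (x:ℝ) + r)/(r/4) :=
      div_nonneg (by linarith) (by linarith)
    have h1 : (((z:ℝ) - (x:ℝ) + r)/(r/4)) < q z + 1 := Nat.lt_floor_add_one _
    have h2 : ((q z : ℝ)) ≤ ((z:ℝ) - (x:ℝ) + r)/(r/4) := Nat.floor_le hz0
    have h3 : (((w:ℝ) - (x:ℝ) + r)/(r/4)) < q w + 1 := Nat.lt_floor_add_one _
    have h4 : ((q w : ℝ)) ≤ ((w:ℝ) - (x:ℝ) + r)/(r/4) := Nat.floor_le hw0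
    rw [hqzw] at h1 h2
    have hr4 : (0:ℝ) < r/4 := by linarith
    have hzu : (z:ℝ) - (x:ℝ) + r < ((q w : ℝ) + 1) * (r/4) := (div_lt_iff₀ hr4).mp h1
    have hzl : (q w : ℝ) * (r/4) ≤ (z:ℝ) - (x:ℝ) + r := (le_div_iff₀ hr4).mp h2
    have hwu : (w:ℝ) - (x:ℝ) + r < ((q w : ℝ) + 1) * (r/4) := (div_lt_iff₀ hr4).mp h3
    have hwl : (q w : ℝ) * (r/4) ≤ (w:ℝ) - (x:ℝ) + r := (le_div_iff₀ hr4).mp h4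
    rw [abs_le]
    constructor <;> nlinarith
  classical
  set g : ℕ → ↥S := fun k => if h : ∃ z : ↥S, dist z x ≤ r ∧ q z = k then h.choose else x
    with hg
  refine ⟨(Finset.range 9).image g, le_trans (Finset.card_image_le) (by simp), ?_⟩
  intro z hz
  rw [Metric.mem_closedBall] at hz
  have hdz : |(z:ℝ) - (x:ℝ)| ≤ r := by
    rw [← Real.dist_eq, ← Subtype.dist_eq]; exact hz
  have hzx : (z:ℝ) - (x:ℝ) ≤ r := (abs_le.mp hdz).2
  have hu8 : ((z:ℝ) - (x:ℝ) + r)/(r/4) ≤ 8 := by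
    rw [div_le_iff₀ (by linarith : (0:ℝ) < r/4)]
    linarith
  have hq8 : q z ≤ 8 := by
    calc q z ≤ ⌊(8:ℝ)⌋₊ := Nat.floor_mono hu8
    _ = 8 := by norm_num
  have hex : ∃ w : ↥S, dist w x ≤ r ∧ q w = q z := ⟨z, hz, rfl⟩
  simp only [Set.mem_iUnion]
  refine ⟨g (q z), Finset.mem_image.mpr ⟨q z, Finset.mem_range.mpr (by omega), rfl⟩, ?_⟩
  rw [Metric.mem_closedBall]
  have hgq : g (q z) = hex.choose := dif_pos hex
  obtain ⟨hc1, hc2⟩ := hex.choose_spec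
  have := key z (g (q z)) hz (by rw [hgq]; exact hc1) (by rw [hgq, hc2])
  exact this
end
end Metric2

section Metric3
noncomputable section

/-- the global gap lemma for `XS` -/
lemma XS_gap {a b : ℝ} (ha : a ∈ XS) (hb : b ∈ XS) (hab : a < b) :
    ∃ u v : ℝ, a ≤ u ∧ v ≤ b ∧ (b - a) / 3 ≤ v - u ∧ XS ∩ Set.Ioo u v = ∅ := by
  have ha0 : 0 ≤ a := (XS_bounds ha).1
  have hb0 : 0 < b := lt_of_le_of_lt ha0 hab
  rcases XS_cases hb with rfl | ⟨n, c, hc, rfl⟩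
  · exact absurd hb0 (lt_irrefl 0)
  obtain ⟨hbn1, hbn2⟩ := piece_bounds (n := n) hc
  have htn := tW_pos n
  have hsn := sW_pos n
  by_cases hA : a ≤ tW (n+1) + sW (n+1)
  · refine ⟨tW (n+1) + sW (n+1), tW n, hA, hbn1, ?_, XS_gap_between n⟩
    have h2 := tsW_succ_le n
    have hsn' : sW n = tW n / 4 := rfl
    have hba : tW n + sW n * c - a ≤ tW n + sW n := by
      obtain ⟨hc0, hc1⟩ := cantorSet_unit hc
      nlinarith
    linarith
  · push_neg at hA
    rcases XS_cases ha with rfl | ⟨m, c', hc', rfl⟩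
    · exfalso
      have := tW_pos (n+1)
      have := sW_pos (n+1)
      linarith
    obtain ⟨ham1, ham2⟩ := piece_bounds (n := m) hc'
    have hmn : m = n := by
      by_contra hne
      rcases Nat.lt_or_ge m n with hlt | hge
      · -- m < n : piece m is far above piece n
        have h1 : tW n + sW n ≤ tW (m+1) + sW (m+1) := tsW_antitone hlt
        have h2 := tsW_succ_le m
        have := tW_pos m
        -- b ≤ tW n + sW n ≤ tW m / 2 < tW m ≤ a, contradiction with a < b
        linarith
      · have hlt' : n < m := by omega
        have h1 : tW m + sW m ≤ tW (n+1) + sW (n+1) := tsW_antitone hlt'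
        linarith
    subst hmn
    have hcc : c' < c := by nlinarith
    obtain ⟨u, v, hu, hv, hlen, hempty⟩ := cantorSet_gap hc' hc hcc
    refine ⟨tW m + sW m * u, tW m + sW m * v, by nlinarith, by nlinarith, by nlinarith, ?_⟩
    ext z
    simp only [Set.mem_inter_iff, Set.mem_Ioo, Set.mem_empty_iff_false, iff_false,
      not_and, and_imp]
    intro hz h1 h2
    have hcu : c' ≤ u := hu
    have hz1 : tW (m+1) + sW (m+1) < z := by nlinarith
    have hz2 : z ≤ tW m + sW m := by
      obtain ⟨_, hc1⟩ := cantorSet_unit hc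
      nlinarith [hv]
    rcases XS_cases hz with rfl | ⟨k, cz, hcz, rfl⟩
    · have := tW_pos (m+1); have := sW_pos (m+1); linarith
    obtain ⟨hk1, hk2⟩ := piece_bounds (n := k) hcz
    have hkm : k = m := by
      by_contra hne
      rcases Nat.lt_or_ge k m with hlt | hge
      · have hh1 : tW m + sW m ≤ tW (k+1) + sW (k+1) := tsW_antitone hlt
        have hh2 := tsW_succ_le k
        have := tW_pos k
        linarith
      · have hlt' : m < k := by omega
        have hh1 : tW k + sW k ≤ tW (m+1) + sW (m+1) := tsW_antitone hlt'
        linarith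
    subst hkm
    have : cz ∈ cantorSet ∩ Set.Ioo u v := by
      refine ⟨hcz, ?_, ?_⟩ <;> nlinarith
    rw [hempty] at this
    exact this

/-- crossing a gap costs a long step -/
lemma cross_gap {x : ℕ → ↥XS} {N : ℕ} {u v : ℝ} (hempty : XS ∩ Set.Ioo u v = ∅)
    (h0 : (x 0 : ℝ) ≤ u) (hN : v ≤ (x N : ℝ)) (huv : u < v) :
    ∃ i, 1 ≤ i ∧ i ≤ N ∧ v - u ≤ dist (x (i-1)) (x i) := by
  classical
  have hPex : ∃ i, i ≤ N ∧ v ≤ (x i : ℝ) := ⟨N, le_refl N, hN⟩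
  set i0 := Nat.find hPex with hi0
  obtain ⟨hi0N, hi0v⟩ := Nat.find_spec hPex
  have hi0pos : 1 ≤ i0 := by
    rcases Nat.eq_zero_or_pos i0 with h | h
    · exfalso
      rw [← hi0, h] at hi0v
      linarith
    · exact h
  have hprev := Nat.find_min hPex (m := i0 - 1) (by omega)
  push_neg at hprev
  have h1 : ((x (i0-1) : ℝ)) < v := hprev (by omega)
  have h2 : ((x (i0-1) : ℝ)) ≤ u := by
    by_contra hcon
    push_neg at hcon
    have : ((x (i0-1) : ℝ)) ∈ XS ∩ Set.Ioo u v := ⟨(x (i0-1)).2, hcon, h1⟩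
    rw [hempty] at this
    exact this
  refine ⟨i0, hi0pos, hi0N, ?_⟩
  rw [Subtype.dist_eq, Real.dist_eq]
  calc v - u ≤ (x i0 : ℝ) - (x (i0-1) : ℝ) := by linarith
  _ ≤ |(x (i0-1) : ℝ) - (x i0 : ℝ)| := by rw [abs_sub_comm]; exact le_abs_self _

lemma XS_ud : IsUniformlyDisconnectedWith ↥XS (1/4) := by
  intro N x hchain
  have hNeq : x N = x 0 := by
    by_contra hne
    have hvne : ((x 0 : ℝ)) ≠ ((x N : ℝ)) := fun h => hne (Subtype.ext h.symm)
    have hD : 0 < dist (x 0) (x N) := dist_pos.mpr (fun h => hne h.symm)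
    set D := dist (x 0) (x N) with hDdef
    have hDeq : D = |(x 0 : ℝ) - (x N : ℝ)| := by
      rw [hDdef, Subtype.dist_eq, Real.dist_eq]
    have hstep : ∃ i, 1 ≤ i ∧ i ≤ N ∧ D / 3 ≤ dist (x (i-1)) (x i) := by
      rcases lt_or_gt_of_ne hvne with hlt | hlt
      · -- x 0 < x N
        obtain ⟨u, v, hu, hv, hlen, hempty⟩ := XS_gap (x 0).2 (x N).2 hlt
        have hDval : D = (x N : ℝ) - (x 0 : ℝ) := by
          rw [hDeq, abs_sub_comm, abs_of_nonneg (by linarith)]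
        obtain ⟨i, hi1, hiN, hgap⟩ := cross_gap hempty hu hv (by linarith)
        exact ⟨i, hi1, hiN, by linarith⟩
      · -- x N < x 0 : use the reversed chain
        obtain ⟨u, v, hu, hv, hlen, hempty⟩ := XS_gap (x N).2 (x 0).2 hlt
        have hDval : D = (x 0 : ℝ) - (x N : ℝ) := by
          rw [hDeq, abs_of_nonneg (by linarith)]
        obtain ⟨i, hi1, hiN, hgap⟩ :=
          cross_gap (x := fun j => x (N - j)) (N := N) hempty
            (by simpa using hu) (by simpa using hv) (by linarith)
        refine ⟨N - i + 1, by omega, by omega, ?_⟩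
        have he1 : N - (i-1) = N - i + 1 := by omega
        have he2 : (N - i + 1) - 1 = N - i := by omega
        rw [he1] at hgap
        rw [he2, dist_comm]
        linarith
    obtain ⟨i, hi1, hiN, hgap⟩ := hstep
    have := hchain i hi1 hiN
    linarith
  intro i
  induction i with
  | zero => intro _; rfl
  | succ i ih =>
    intro hiN
    have h := hchain (i+1) (by omega) hiN
    rw [hNeq, dist_self, mul_zero] at h
    have h0 : dist (x i) (x (i+1)) = 0 := by
      have : x (i+1-1) = x i := by norm_num
      rw [this] at h
      exact le_antisymm h dist_nonneg
    have := dist_eq_zero.mp h0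
    rw [← this]
    exact ih (by omega)

end
end Metric3

section Metric4
noncomputable section

/-- the distinguished point -/
def pXS : ↥XS := ⟨0, zero_mem_XS⟩

lemma XS_univ_bounded (s : Set ↥XS) : Bornology.IsBounded (Set.univ : Set ↥s) := by
  rw [Metric.isBounded_iff]
  refine ⟨tW 0 + sW 0, fun z _ w _ => ?_⟩
  rw [Subtype.dist_eq, Subtype.dist_eq, Real.dist_eq]
  have hz := XS_bounds (z : ↥XS).2
  have hw := XS_bounds (w : ↥XS).2
  rw [abs_le]
  constructor <;> linarith [hz.1, hz.2, hw.1, hw.2]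

lemma XS_bounded : Bornology.IsBounded (Set.univ : Set ↥XS) := by
  rw [Metric.isBounded_iff]
  refine ⟨tW 0 + sW 0, fun z _ w _ => ?_⟩
  rw [Subtype.dist_eq, Real.dist_eq]
  have hz := XS_bounds z.2
  have hw := XS_bounds w.2
  rw [abs_le]
  constructor <;> linarith [hz.1, hz.2, hw.1, hw.2]

lemma XS_diam_ge : (5/4 : ℝ) ≤ Metric.diam (Set.univ : Set ↥XS) := by
  have hb : (tW 0 + sW 0 * 1) ∈ XS := piece_mem_XS one_mem_cantorSet
  have := Metric.dist_le_diam_of_mem XS_bounded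
    (Set.mem_univ (⟨tW 0 + sW 0 * 1, hb⟩ : ↥XS)) (Set.mem_univ pXS)
  have h2 : dist (⟨tW 0 + sW 0 * 1, hb⟩ : ↥XS) pXS = 5/4 := by
    rw [Subtype.dist_eq, Real.dist_eq]
    show |tW 0 + sW 0 * 1 - 0| = 5/4
    have ht : tW 0 = 1 := tW_zero
    have hs : sW 0 = 1/4 := by rw [show sW 0 = tW 0 / 4 from rfl, ht]
    rw [ht, hs]
    norm_num
  linarith [h2 ▸ this]

lemma dist_pXS (z : ↥XS) : dist z pXS = (z : ℝ) := by
  rw [Subtype.dist_eq, Real.dist_eq]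
  show |(z:ℝ) - 0| = (z:ℝ)
  rw [sub_zero, abs_of_nonneg (XS_bounds z.2).1]

/-- arbitrarily thin annuli around `pXS` -/
lemma XS_annulus {ρ : ℝ} (hρ : 0 < ρ) (M : ℕ) :
    ∃ m, M ≤ m ∧ ∀ z : ↥XS, dist z pXS ≤ tW m / 2 → dist z pXS < ρ * (tW m / 2) := by
  obtain ⟨m, hM, hm⟩ := tW_ratio (ρ/2) (by linarith) M
  refine ⟨m, hM, fun z hz => ?_⟩
  rw [dist_pXS] at hz ⊢
  have hlt : (z:ℝ) < tW m := lt_of_le_of_lt hz (by linarith [tW_pos m])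
  calc (z:ℝ) ≤ tW (m+1) + sW (m+1) := XS_small z.2 m hlt
  _ < (ρ/2) * tW m := hm
  _ = ρ * (tW m / 2) := by ring

/-- the annulus set version -/
lemma XS_annulus_empty {ρ : ℝ} (hρ : 0 < ρ) (M : ℕ) :
    ∃ m, M ≤ m ∧
      Metric.closedBall pXS (tW m / 2) \ Metric.ball pXS (ρ * (tW m / 2)) = ∅ := by
  obtain ⟨m, hM, hm⟩ := XS_annulus hρ M
  refine ⟨m, hM, ?_⟩
  ext z
  simp only [Set.mem_diff, Metric.mem_closedBall, Metric.mem_ball,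
    Set.mem_empty_iff_false, iff_false, not_and, not_not]
  exact fun h => hm z h

/-- the clopen neighbourhood isolating the `n`-th piece -/
def uB (n : ℕ) : ℝ := if n = 0 then 2 else tW (n-1)

def sNbhd (n : ℕ) : Set ↥XS :=
  {z : ↥XS | tW (n+1) + sW (n+1) < (z : ℝ) ∧ (z : ℝ) < uB n}

lemma piece_in_sNbhd {n : ℕ} {c : ℝ} (hc : c ∈ cantorSet) {z : ↥XS}
    (hz : (z : ℝ) = tW n + sW n * c) : z ∈ sNbhd n := by
  obtain ⟨h1, h2⟩ := piece_bounds (n := n) hc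
  have h3 := tsW_succ_le n
  have htn := tW_pos n
  constructor
  · rw [hz]; linarith
  · rw [hz]
    rcases Nat.eq_zero_or_pos n with h0 | h0
    · subst h0
      have huB : uB 0 = 2 := if_pos rfl
      rw [huB]
      have ht : tW 0 = 1 := tW_zero
      have hs : sW 0 = 1/4 := by rw [show sW 0 = tW 0 / 4 from rfl, ht]
      linarith [h2, ht, hs]
    · rw [show uB n = tW (n-1) from if_neg (by omega)]
      have hn1 : n = (n-1) + 1 := by omega
      have h4 : tW n + sW n ≤ tW (n-1) / 2 := by
        rw [hn1]; exact tsW_succ_le (n-1)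
      have := tW_pos (n-1)
      linarith

lemma sNbhd_members {n : ℕ} {z : ↥XS} (hz : z ∈ sNbhd n) :
    ∃ c ∈ cantorSet, (z : ℝ) = tW n + sW n * c := by
  obtain ⟨h1, h2⟩ := hz
  rcases XS_cases z.2 with h0 | ⟨k, c, hc, hk⟩
  · exfalso
    rw [h0] at h1
    have := tW_pos (n+1); have := sW_pos (n+1)
    linarith
  obtain ⟨hk1, hk2⟩ := piece_bounds (n := k) hc
  rw [← hk] at hk1 hk2
  have hkn : k = n := by
    by_contra hne
    rcases Nat.lt_or_ge k n with hlt | hge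
    · -- k < n: z ≥ tW k ≥ tW (n-1) = uB n, contradiction
      have hn0 : n ≠ 0 := by omega
      have huB : uB n = tW (n-1) := if_neg hn0
      have : tW (n-1) ≤ tW k := tW_antitone (by omega)
      rw [huB] at h2
      linarith
    · have hlt' : n < k := by omega
      have : tW k + sW k ≤ tW (n+1) + sW (n+1) := tsW_antitone hlt'
      linarith
  subst hkn
  exact ⟨c, hc, hk⟩

lemma sNbhd_open (n : ℕ) : IsOpen (sNbhd n) := by
  have : sNbhd n = (Subtype.val : ↥XS → ℝ) ⁻¹' (Set.Ioo (tW (n+1) + sW (n+1)) (uB n)) := rfl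
  rw [this]
  exact (isOpen_Ioo).preimage continuous_subtype_val

/-- the pieces are uniformly perfect -/
lemma sNbhd_up (n : ℕ) : IsUniformlyPerfectWith ↥(sNbhd n) (1/9) := by
  intro x r hr hrd
  have hsn := sW_pos n
  -- the diameter of the piece is at most sW n
  have hdiam : Metric.diam (Set.univ : Set ↥(sNbhd n)) ≤ sW n := by
    apply Metric.diam_le_of_forall_dist_le hsn.le
    intro z _ w _
    obtain ⟨cz, hcz, hz⟩ := sNbhd_members z.2
    obtain ⟨cw, hcw, hw⟩ := sNbhd_members w.2
    obtain ⟨hz0, hz1⟩ := cantorSet_unit hcz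
    obtain ⟨hw0, hw1⟩ := cantorSet_unit hcw
    rw [Subtype.dist_eq, Subtype.dist_eq, Real.dist_eq, hz, hw, abs_le]
    constructor <;> nlinarith
  have hrs : r < sW n := lt_of_lt_of_le hrd hdiam
  obtain ⟨cx, hcx, hx⟩ := sNbhd_members x.2
  -- find the right scale
  have hkex : ∃ k : ℕ, sW n * (3:ℝ)⁻¹ ^ k ≤ r := by
    obtain ⟨k, hk⟩ := exists_pow_lt_of_lt_one (div_pos hr hsn)
      (show (3:ℝ)⁻¹ < 1 by norm_num)
    exact ⟨k, by rw [← le_div_iff₀' hsn]; exact hk.le⟩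
  classical
  set k0 := Nat.find hkex with hk0
  have hspec : sW n * (3:ℝ)⁻¹ ^ k0 ≤ r := Nat.find_spec hkex
  have hk0pos : k0 ≠ 0 := by
    intro h
    rw [h, pow_zero, mul_one] at hspec
    linarith
  obtain ⟨j, hj⟩ : ∃ j, k0 = j + 1 := ⟨k0 - 1, by omega⟩
  have hmin : ¬ (sW n * (3:ℝ)⁻¹ ^ j ≤ r) := Nat.find_min hkex (by omega)
  push_neg at hmin
  -- get the companion point
  obtain ⟨y, hy, hyl, hyr⟩ := cantorSet_perfect_aux k0 cx hcx
  set zval : ℝ := tW n + sW n * y with hzval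
  have hzmem : zval ∈ XS := piece_mem_XS hy
  have hzs : (⟨zval, hzmem⟩ : ↥XS) ∈ sNbhd n := piece_in_sNbhd hy rfl
  refine ⟨⟨⟨zval, hzmem⟩, hzs⟩, ?_, ?_⟩
  · rw [Metric.mem_closedBall, Subtype.dist_eq, Subtype.dist_eq, Real.dist_eq, hx]
    have : |zval - (tW n + sW n * cx)| = sW n * |cx - y| := by
      rw [hzval, show tW n + sW n * y - (tW n + sW n * cx) = sW n * (y - cx) by ring,
        abs_mul, abs_of_nonneg hsn.le, abs_sub_comm]
    rw [this]
    calc sW n * |cx - y| ≤ sW n * (3:ℝ)⁻¹ ^ k0 := by nlinarith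
    _ ≤ r := hspec
  · rw [Metric.mem_ball, Subtype.dist_eq, Subtype.dist_eq, Real.dist_eq, hx, not_lt]
    have heq : |zval - (tW n + sW n * cx)| = sW n * |cx - y| := by
      rw [hzval, show tW n + sW n * y - (tW n + sW n * cx) = sW n * (y - cx) by ring,
        abs_mul, abs_of_nonneg hsn.le, abs_sub_comm]
    rw [heq]
    have h1 : sW n * (3:ℝ)⁻¹ ^ (k0+1) ≤ sW n * |cx - y| := by nlinarith
    have h2 : (3:ℝ)⁻¹ ^ (k0+1) = (3:ℝ)⁻¹ ^ j * (3:ℝ)⁻¹ ^ 2 := by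
      rw [← pow_add]; congr 1; omega
    have h3 : r / 9 < sW n * (3:ℝ)⁻¹ ^ (k0+1) := by
      rw [h2]
      have : sW n * ((3:ℝ)⁻¹ ^ j * (3:ℝ)⁻¹ ^ 2) = (sW n * (3:ℝ)⁻¹ ^ j) / 9 := by
        norm_num; ring
      rw [this]
      linarith
    calc (1/9) * r = r / 9 := by ring
    _ ≤ sW n * |cx - y| := by linarith
end
end Metric4

section Metric5
noncomputable section

lemma pXS_mem_SUP : pXS ∈ SUP ↥XS := by
  intro s hs
  rintro ⟨ρ, hρ0, hρ1, hup⟩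
  obtain ⟨ε, hε, hball⟩ := Metric.mem_nhds_iff.mp hs
  have hp0s : pXS ∈ s := hball (Metric.mem_ball_self hε)
  obtain ⟨k, hk⟩ := exists_pow_lt_of_lt_one hε (show (4:ℝ)⁻¹ < 1 by norm_num)
  have hkk : k ≤ k * k := by
    rcases Nat.eq_zero_or_pos k with h | h
    · simp [h]
    · calc k = 1 * k := (one_mul k).symm
      _ ≤ k * k := Nat.mul_le_mul_right k h
  have htk : tW k < ε :=
    lt_of_le_of_lt (pow_le_pow_of_le_one (by norm_num) (by norm_num) hkk) hk
  have hq1m : tW k + sW k * 0 ∈ XS := piece_mem_XS zero_mem_cantorSet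
  set q1 : ↥XS := ⟨tW k + sW k * 0, hq1m⟩ with hq1def
  have hq1 : q1 ∈ s := by
    apply hball
    rw [Metric.mem_ball, dist_pXS]
    show tW k + sW k * 0 < ε
    rw [mul_zero, add_zero]
    exact htk
  obtain ⟨m, hm1, hm2⟩ := XS_annulus hρ0 k
  set r := tW m / 2 with hrdef
  have hrpos : 0 < r := half_pos (tW_pos m)
  have hrlt : r < Metric.diam (Set.univ : Set ↥s) := by
    have hd : dist (⟨q1, hq1⟩ : ↥s) ⟨pXS, hp0s⟩ = tW k := by
      rw [Subtype.dist_eq]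
      show dist q1 pXS = tW k
      rw [dist_pXS]
      show tW k + sW k * 0 = tW k
      rw [mul_zero, add_zero]
    have hdd := Metric.dist_le_diam_of_mem (XS_univ_bounded s)
      (Set.mem_univ (⟨q1, hq1⟩ : ↥s)) (Set.mem_univ ⟨pXS, hp0s⟩)
    have hmk : tW m ≤ tW k := tW_antitone hm1
    rw [hd] at hdd
    have : r < tW m := by rw [hrdef]; linarith [tW_pos m]
    linarith
  obtain ⟨z, hz1, hz2⟩ := hup ⟨pXS, hp0s⟩ r hrpos hrlt
  have he : dist z (⟨pXS, hp0s⟩ : ↥s) = dist (z : ↥XS) pXS := Subtype.dist_eq _ _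
  rw [Metric.mem_closedBall, he] at hz1
  exact hz2 (by rw [Metric.mem_ball, he]; exact hm2 (z : ↥XS) hz1)

lemma SUP_subset : SUP ↥XS ⊆ {pXS} := by
  intro q hq
  rw [Set.mem_singleton_iff]
  by_contra hne
  rcases XS_cases q.2 with h0 | ⟨n, c, hc, hqn⟩
  · exact hne (Subtype.ext h0)
  have hqmem : q ∈ sNbhd n := piece_in_sNbhd hc hqn
  exact hq (sNbhd n) ((sNbhd_open n).mem_nhds hqmem)
    ⟨1/9, by norm_num, by norm_num, sNbhd_up n⟩

lemma SUP_eq : SUP ↥XS = {pXS} := by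
  apply Set.Subset.antisymm SUP_subset
  intro q hq
  rw [Set.mem_singleton_iff] at hq
  rw [hq]
  exact pXS_mem_SUP

lemma XS_diam_gt_half (m : ℕ) : tW m / 2 < Metric.diam (Set.univ : Set ↥XS) := by
  have h1 := tW_le_one m
  have := XS_diam_ge
  linarith

lemma XS_not_up : ¬ IsUniformlyPerfect ↥XS := by
  rintro ⟨ρ, hρ0, hρ1, hup⟩
  obtain ⟨m, _, hm⟩ := XS_annulus_empty hρ0 0
  obtain ⟨z, hz⟩ := hup pXS (tW m / 2) (half_pos (tW_pos m)) (XS_diam_gt_half m)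
  rw [hm] at hz
  exact hz

lemma XS_hastype : HasType ↥XS true true false :=
  ⟨iff_of_true (isDoubling_real_subset XS) rfl,
   iff_of_true ⟨1/4, by norm_num, by norm_num, XS_ud⟩ rfl,
   iff_of_false XS_not_up (by simp)⟩

end
end Metric5

theorem statement_13 :
    ∃ (X : Type) (m : MetricSpace X) (p : X),
      @IsCantorSpace X (metricTopology m) ∧
      @HasType X m true true false ∧
      @SUP X m = {p} ∧
      ∀ ρ : ℝ, 0 < ρ → ρ ≤ 1 →
        ∃ r : ℝ, 0 < r ∧ r < @Metric.diam X m.toPseudoMetricSpace Set.univ ∧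
          @Metric.closedBall X m.toPseudoMetricSpace p r \
            @Metric.ball X m.toPseudoMetricSpace p (ρ * r) = ∅ := by
  refine ⟨↥XS, inferInstance, pXS, ⟨XShomeo.symm⟩, XS_hastype, SUP_eq, ?_⟩
  intro ρ hρ0 hρ1
  obtain ⟨m, _, hm⟩ := XS_annulus_empty hρ0 0
  exact ⟨tW m / 2, half_pos (tW_pos m), XS_diam_gt_half m, hm⟩

end
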